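/- Let P : ℝ² → ℝ be a submetry. Then there exist a unit vector v ∈ ℝ² and a constant c ∈ ℝ such that P(x) = ⟨x, v⟩ + c for all x, i.e., up to an additive constant P is an orthogonal projection onto a line; in particular every fiber of P is an affine line. -/

import Mathlib

open Metric

local notation "⟪" x ", " y "⟫" => @inner ℝ _ _ x y

/-- Equality case of the triangle inequality in an inner product space. -/
lemma submetry_aux {E : Type*} [NormedAddCommGroup E] [InnerProductSpace ℝ E]
    (a b : E) (h : ‖a - b‖ = ‖a‖ + ‖b‖) : ‖b‖ • a = ‖a‖ • (-b) := by
  have hsq := norm_sub_sq_real a b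
  rw [h] at hsq
  have hi : ⟪a, -b⟫ = ‖a‖ * ‖-b‖ := by
    rw [inner_neg_right, norm_neg]
    nlinarith
  have := inner_eq_norm_mul_iff_real.mp hi
  rwa [norm_neg] at this

/-- A submetry `P : ℝ² → ℝ` is, up to an additive constant, the orthogonal
projection onto a line: `P x = ⟪x, v⟫ + c` for a unit vector `v`. -/
theorem submetry_R2_to_R_is_projection
    (P : EuclideanSpace ℝ (Fin 2) → ℝ)
    (hsurj : Function.Surjective P)
    (hP : ∀ (x : EuclideanSpace ℝ (Fin 2)) (t : ℝ),
      dist (P x) t = Metric.infDist x (P ⁻¹' {t})) :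
    ∃ (v : EuclideanSpace ℝ (Fin 2)) (c : ℝ), ‖v‖ = 1 ∧
      (∀ x, P x = inner ℝ x v + c) ∧
      (∀ t : ℝ, P ⁻¹' {t} = {x | (inner ℝ x v : ℝ) = t - c}) := by
  -- P is 1-Lipschitz
  have hLip : ∀ x y, dist (P x) (P y) ≤ dist x y := by
    intro x y
    rw [hP x (P y)]
    exact Metric.infDist_le_dist_of_mem rfl
  have hcont : Continuous P :=
    (LipschitzWith.of_dist_le_mul (K := 1) (fun x y => by simpa using hLip x y)).continuous
  -- distance to fibers is attained
  have hex : ∀ (x : EuclideanSpace ℝ (Fin 2)) (t : ℝ),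
      ∃ y, P y = t ∧ dist x y = |P x - t| := by
    intro x t
    have hne : (P ⁻¹' {t}).Nonempty := by
      obtain ⟨a, ha⟩ := hsurj t; exact ⟨a, by simp [ha]⟩
    obtain ⟨y, hy, hyd⟩ :=
      (isClosed_singleton.preimage hcont).exists_infDist_eq_dist hne x
    exact ⟨y, hy, by rw [← hyd, ← hP x t, Real.dist_eq]⟩
  -- the point one below P 0
  obtain ⟨b, hbP, hbd⟩ := hex 0 (P 0 - 1)
  have hbn : ‖b‖ = 1 := by
    have : dist (0 : EuclideanSpace ℝ (Fin 2)) b = ‖b‖ := by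
      rw [dist_eq_norm, zero_sub, norm_neg]
    rw [this] at hbd
    rw [hbd]; norm_num
  set v : EuclideanSpace ℝ (Fin 2) := -b with hv
  have hvn : ‖v‖ = 1 := by rw [hv, norm_neg, hbn]
  -- P is isometric along the line through 0 in direction v
  have hline : ∀ t : ℝ, P (t • v) = P 0 + t := by
    have hpos : ∀ t : ℝ, 0 < t → P (t • v) = P 0 + t := by
      intro t ht
      obtain ⟨a, haP, had⟩ := hex 0 (P 0 + t)
      have han : ‖a‖ = t := by
        have : dist (0 : EuclideanSpace ℝ (Fin 2)) a = ‖a‖ := by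
          rw [dist_eq_norm, zero_sub, norm_neg]
        rw [this] at had
        rw [had, abs_of_nonpos (by linarith)]; ring
      -- equality in the triangle inequality between a and b
      have h1 : t + 1 ≤ ‖a - b‖ := by
        have := hLip a b
        rw [Real.dist_eq, haP, hbP, dist_eq_norm] at this
        calc t + 1 = |P 0 + t - (P 0 - 1)| := by rw [abs_of_nonneg (by linarith)]; ring
        _ ≤ ‖a - b‖ := this
      have h2 : ‖a - b‖ ≤ t + 1 := by
        calc ‖a - b‖ ≤ ‖a‖ + ‖b‖ := norm_sub_le a b
        _ = t + 1 := by rw [han, hbn]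
      have heq : ‖a - b‖ = ‖a‖ + ‖b‖ := by rw [han, hbn]; linarith
      have := submetry_aux a b heq
      rw [hbn, han, one_smul] at this
      rw [← hv] at this
      rw [← this, haP]
    intro t
    rcases lt_trichotomy t 0 with ht | ht | ht
    · -- negative direction
      obtain ⟨b', hP', hd'⟩ := hex 0 (P 0 + t)
      have hbn' : ‖b'‖ = -t := by
        have : dist (0 : EuclideanSpace ℝ (Fin 2)) b' = ‖b'‖ := by
          rw [dist_eq_norm, zero_sub, norm_neg]
        rw [this] at hd'
        rw [hd', abs_of_nonneg (by linarith)]; ring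
      have hPv : P v = P 0 + 1 := by
        have := hpos 1 one_pos
        rwa [one_smul] at this
      have h1 : 1 - t ≤ ‖v - b'‖ := by
        have := hLip v b'
        rw [Real.dist_eq, hPv, hP', dist_eq_norm] at this
        calc 1 - t = |P 0 + 1 - (P 0 + t)| := by rw [abs_of_nonneg (by linarith)]; ring
        _ ≤ ‖v - b'‖ := this
      have heq : ‖v - b'‖ = ‖v‖ + ‖b'‖ := by
        have h2 : ‖v - b'‖ ≤ ‖v‖ + ‖b'‖ := norm_sub_le v b'
        rw [hvn, hbn'] at h2 ⊢
        linarith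
      have := submetry_aux v b' heq
      rw [hvn, hbn', one_smul] at this
      have hb' : b' = t • v := by
        rw [← neg_neg b', ← this, ← neg_smul, neg_neg]
      rw [← hb', hP']
    · simp [ht]
    · exact hpos t ht
  have key : ∀ x, (⟪x, v⟫ : ℝ) = P x - P 0 := by
      intro x
      set a := P x - P 0 with ha
      have h2 : ∀ t : ℝ, (a - t) ^ 2 ≤ ‖x‖ ^ 2 - 2 * t * ⟪x, v⟫ + t ^ 2 := by
        intro t
        have h1 : |a - t| ≤ ‖x - t • v‖ := by
          have := hLip x (t • v)
          rw [Real.dist_eq, hline t, dist_eq_norm] at this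
          calc |a - t| = |P x - (P 0 + t)| := by rw [ha]; ring_nf
          _ ≤ ‖x - t • v‖ := this
        have hsq : (a - t) ^ 2 ≤ ‖x - t • v‖ ^ 2 := by
          rw [← sq_abs (a - t)]
          exact pow_le_pow_left₀ (abs_nonneg _) h1 2
        have hexp : ‖x - t • v‖ ^ 2 = ‖x‖ ^ 2 - 2 * t * ⟪x, v⟫ + t ^ 2 := by
          rw [norm_sub_sq_real, real_inner_smul_right, norm_smul, hvn]
          simp [Real.norm_eq_abs, mul_pow, sq_abs]
          ring
        linarith [hexp ▸ hsq]
      by_contra hne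
      set d : ℝ := ⟪x, v⟫ - a with hd
      have hdne : d ≠ 0 := sub_ne_zero.mpr hne
      set K : ℝ := ‖x‖ ^ 2 - a ^ 2 with hK
      have h3 : ∀ t : ℝ, 2 * t * d ≤ K := by
        intro t
        have := h2 t
        rw [hK, hd]
        nlinarith
      have := h3 ((K + 1) / (2 * d))
      have heq : 2 * ((K + 1) / (2 * d)) * d = K + 1 := by
        field_simp
      linarith [heq ▸ this]
  refine ⟨v, P 0, hvn, ?_, ?_⟩
  · intro x
    have := key x
    linarith
  · -- fibers
    intro t
    ext x
    simp only [Set.mem_preimage, Set.mem_singleton_iff, Set.mem_setOf_eq]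
    constructor
    · intro h; rw [key x, h]
    · intro h; have := key x; linarith
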